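/- Let f(z) = ∑_{j≥0} g_j z^j be a power series with nonnegative real coefficients g_j, with g_0 > 0 and g_1 > 0, converging for |z| ≤ y where 0 < y < 1. Then for every real s, f(y)^2 - |f(y e^{is})|^2 ≥ 2 g_0 g_1 y (1 - cos s). -/

import Mathlib

set_option maxHeartbeats 1000000

theorem sq_sub_abs_sq_ge (g : ℕ → ℝ) (hg : ∀ j, 0 ≤ g j) (h0 : 0 < g 0) (h1 : 0 < g 1)
    (y : ℝ) (hy0 : 0 < y) (hy1 : y < 1)
    (hsum : Summable fun j => g j * y ^ j) (s : ℝ) :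
    (∑' j : ℕ, g j * y ^ j) ^ 2 -
        ‖∑' j : ℕ, (g j : ℂ) * (y * Complex.exp (s * Complex.I)) ^ j‖ ^ 2 ≥
      2 * g 0 * g 1 * y * (1 - Real.cos s) := by
  set w : ℂ := (y : ℂ) * Complex.exp (s * Complex.I) with hw
  have hwabs : ‖w‖ = y := by
    rw [hw, norm_mul, Complex.norm_exp_ofReal_mul_I, Complex.norm_real, Real.norm_eq_abs,
      abs_of_pos hy0, mul_one]
  have hnorm : ∀ j : ℕ, ‖(g j : ℂ) * w ^ j‖ = g j * y ^ j := by
    intro j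
    rw [norm_mul, norm_pow, hwabs,
      Complex.norm_real, Real.norm_eq_abs, abs_of_nonneg (hg j)]
  have hsumC : Summable fun j : ℕ => (g j : ℂ) * w ^ j :=
    Summable.of_norm (by simpa only [hnorm] using hsum)
  -- tails
  have hsumT : Summable fun j : ℕ => g (j + 2) * y ^ (j + 2) :=
    (summable_nat_add_iff 2).2 hsum
  have hsumTC : Summable fun j : ℕ => (g (j + 2) : ℂ) * w ^ (j + 2) :=
    (summable_nat_add_iff 2).2 hsumC
  set T : ℝ := ∑' j : ℕ, g (j + 2) * y ^ (j + 2) with hT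
  have hT0 : 0 ≤ T := tsum_nonneg fun j => mul_nonneg (hg _) (by positivity)
  have hF : (∑' j : ℕ, g j * y ^ j) = g 0 + g 1 * y + T := by
    rw [Summable.tsum_eq_zero_add hsum, Summable.tsum_eq_zero_add ((summable_nat_add_iff 1).2 hsum)]
    have he : (fun b : ℕ => g (b + 1 + 1) * y ^ (b + 1 + 1)) = fun j : ℕ => g (j + 2) * y ^ (j + 2) := rfl
    rw [he, hT]
    ring
  have hS : (∑' j : ℕ, (g j : ℂ) * w ^ j)
      = (g 0 : ℂ) + (g 1 : ℂ) * w + ∑' j : ℕ, (g (j + 2) : ℂ) * w ^ (j + 2) := by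
    rw [Summable.tsum_eq_zero_add hsumC, Summable.tsum_eq_zero_add ((summable_nat_add_iff 1).2 hsumC)]
    have he : (fun b : ℕ => (g (b + 1 + 1) : ℂ) * w ^ (b + 1 + 1)) = fun j : ℕ => (g (j + 2) : ℂ) * w ^ (j + 2) := rfl
    rw [he]
    ring
  have hTCle : ‖∑' j : ℕ, (g (j + 2) : ℂ) * w ^ (j + 2)‖ ≤ T := by
    calc ‖∑' j : ℕ, (g (j + 2) : ℂ) * w ^ (j + 2)‖
        ≤ ∑' j : ℕ, ‖(g (j + 2) : ℂ) * w ^ (j + 2)‖ := norm_tsum_le_tsum_norm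
          (by simpa only [hnorm] using hsumT)
      _ = T := by rw [hT]; exact tsum_congr fun j => hnorm (j + 2)
  set A : ℝ := ‖(g 0 : ℂ) + (g 1 : ℂ) * w‖ with hA
  have hA0 : 0 ≤ A := norm_nonneg _
  have hAle : A ≤ g 0 + g 1 * y := by
    calc A ≤ ‖(g 0 : ℂ)‖ + ‖(g 1 : ℂ) * w‖ :=
          norm_add_le _ _
      _ = g 0 + g 1 * y := by
          rw [norm_mul, hwabs, Complex.norm_real, Complex.norm_real, Real.norm_eq_abs, Real.norm_eq_abs,
            abs_of_nonneg (hg 0), abs_of_nonneg (hg 1)]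
  have hA2 : A ^ 2 = g 0 ^ 2 + g 1 ^ 2 * y ^ 2 + 2 * g 0 * g 1 * y * Real.cos s := by
    rw [hA, Complex.sq_norm, hw, Complex.exp_mul_I]
    simp [Complex.normSq_apply, Complex.cos_ofReal_re, Complex.sin_ofReal_re]
    linear_combination g 1 ^ 2 * y ^ 2 * Real.sin_sq_add_cos_sq s
  have hSle : ‖∑' j : ℕ, (g j : ℂ) * w ^ j‖ ≤ A + T := by
    rw [hS]
    calc ‖(g 0 : ℂ) + (g 1 : ℂ) * w + ∑' j : ℕ, (g (j + 2) : ℂ) * w ^ (j + 2)‖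
        ≤ A + ‖∑' j : ℕ, (g (j + 2) : ℂ) * w ^ (j + 2)‖ := norm_add_le _ _
      _ ≤ A + T := by linarith
  have hS0 : 0 ≤ ‖∑' j : ℕ, (g j : ℂ) * w ^ j‖ := norm_nonneg _
  rw [hF]
  nlinarith [hSle, hS0, hA2, hAle, hT0, hA0, Real.cos_le_one s, Real.neg_one_le_cos s]
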